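/- Let C_v be a complete and algebraically closed field with a nontrivial non-archimedean absolute value |·|_v, and let φ ∈ C_v[z] be a polynomial of degree d ≥ 2 with leading coefficient a_d ∈ C_v^×. Set ρ_v = |a_d|_v^{-1/(d-1)}. Then there is a unique smallest disk U_0 ⊆ C_v containing the filled Julia set 𝔎_{φ,v} (that is, U_0 is a disk containing 𝔎_{φ,v} which is contained in every disk containing 𝔎_{φ,v}), and moreover U_0 is a closed disk of some radius r_v with r_v ≥ ρ_v. -/
import Mathlib


open Polynomial

/-- Sequential completeness of a field with respect to an absolute value. -/
def SeqComplete {Cv : Type*} [Field Cv] (v : AbsoluteValue Cv ℝ) : Prop :=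
  ∀ s : ℕ → Cv, (∀ ε : ℝ, 0 < ε → ∃ N : ℕ, ∀ m ≥ N, ∀ n ≥ N, v (s m - s n) < ε) →
    ∃ L : Cv, ∀ ε : ℝ, 0 < ε → ∃ N : ℕ, ∀ n ≥ N, v (s n - L) < ε

/-- `U` is a closed disk (of positive radius): `U = {x : |x - a| ≤ r}`. -/
def IsClosedDisk {Cv : Type*} [Field Cv] (v : AbsoluteValue Cv ℝ) (U : Set Cv) : Prop :=
  ∃ (a : Cv) (r : ℝ), 0 < r ∧ U = {x : Cv | v (x - a) ≤ r}

/-- `U` is an open disk (of positive radius): `U = {x : |x - a| < r}`. -/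
def IsOpenDisk {Cv : Type*} [Field Cv] (v : AbsoluteValue Cv ℝ) (U : Set Cv) : Prop :=
  ∃ (a : Cv) (r : ℝ), 0 < r ∧ U = {x : Cv | v (x - a) < r}

/-- `U` is a disk: an open or a closed disk. -/
def IsDisk {Cv : Type*} [Field Cv] (v : AbsoluteValue Cv ℝ) (U : Set Cv) : Prop :=
  IsOpenDisk v U ∨ IsClosedDisk v U

/-- The filled Julia set of a polynomial `φ ∈ C_v[z]`: the set of points with
bounded forward orbit. -/
def filledJulia {Cv : Type*} [Field Cv] (v : AbsoluteValue Cv ℝ) (φ : Polynomial Cv) :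
    Set Cv :=
  {x : Cv | ∃ B : ℝ, ∀ n : ℕ, v ((fun y => φ.eval y)^[n] x) ≤ B}



section Helpers

variable {Cv : Type*} [Field Cv] (v : AbsoluteValue Cv ℝ)

lemma v_multiset_prod (M : Multiset Cv) : v M.prod = (M.map v).prod := by
  induction M using Multiset.induction_on with
  | empty => simp
  | cons a s ih => simp [v.map_mul, ih]

lemma multiset_prod_const {M : Multiset ℝ} {t : ℝ} (h : ∀ a ∈ M, a = t) :
    M.prod = t ^ Multiset.card M := by
  induction M using Multiset.induction_on with
  | empty => simp
  | cons a s ih =>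
    rw [Multiset.prod_cons, h a (Multiset.mem_cons_self a s),
      ih (fun b hb => h b (Multiset.mem_cons_of_mem hb)), Multiset.card_cons, pow_succ]
    ring

lemma multiset_bound (M : Multiset ℝ) : ∃ b : ℝ, ∀ a ∈ M, a ≤ b := by
  induction M using Multiset.induction_on with
  | empty => exact ⟨0, by simp⟩
  | cons a s ih =>
    obtain ⟨b, hb⟩ := ih
    exact ⟨max a b, by
      intro x hx
      rcases Multiset.mem_cons.mp hx with h | h
      · exact h ▸ le_max_left _ _
      · exact le_trans (hb x h) (le_max_right _ _)⟩

lemma multiset_bound_lt {M : Multiset ℝ} {s : ℝ} (h : ∀ a ∈ M, a < s) :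
    ∃ b : ℝ, b < s ∧ ∀ a ∈ M, a ≤ b := by
  induction M using Multiset.induction_on with
  | empty => exact ⟨s - 1, by linarith, by simp⟩
  | cons a t ih =>
    obtain ⟨b, hbs, hb⟩ := ih (fun x hx => h x (Multiset.mem_cons_of_mem hx))
    refine ⟨max a b, max_lt (h a (Multiset.mem_cons_self a t)) hbs, ?_⟩
    intro x hx
    rcases Multiset.mem_cons.mp hx with hx | hx
    · exact hx ▸ le_max_left _ _
    · exact le_trans (hb x hx) (le_max_right _ _)

lemma v_add_eq (hna : IsNonarchimedean (v : Cv → ℝ)) {a b : Cv} (h : v b < v a) :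
    v (a + b) = v a := by
  refine le_antisymm (le_trans (hna a b) (by rw [max_eq_left h.le])) ?_
  by_contra hlt
  push_neg at hlt
  have h2 : v a = v ((a + b) + (-b)) := by ring_nf
  rw [h2] at hlt h
  have := hna (a + b) (-b)
  rw [v.map_neg] at this
  have hb : v b < v (a + b + -b) := h
  have : v (a + b + -b) ≤ max (v (a + b)) (v b) := this
  rcases max_cases (v (a + b)) (v b) with ⟨he, _⟩ | ⟨he, _⟩ <;> rw [he] at this <;> linarith

end Helpers



section H2
variable {Cv : Type*} [Field Cv] [IsAlgClosed Cv] (v : AbsoluteValue Cv ℝ)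

lemma v_eval_eq (P : Polynomial Cv) (y : Cv) :
    v (P.eval y) = v P.leadingCoeff * ((P.roots.map (fun u => v (y - u))).prod) := by
  have hsplit : P.roots.card = P.natDegree :=
    (splits_iff_card_roots).mp (IsAlgClosed.splits P)
  have key := Polynomial.C_leadingCoeff_mul_prod_multiset_X_sub_C hsplit
  conv_lhs => rw [← key]
  rw [eval_mul, eval_C, v.map_mul, eval_multiset_prod, Multiset.map_map,
    v_multiset_prod v, Multiset.map_map]
  congr 2
  refine Multiset.map_congr rfl (fun u _ => ?_)
  simp

/-- Iterates of a polynomial as polynomials. -/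
noncomputable def iterPoly (φ : Polynomial Cv) : ℕ → Polynomial Cv
  | 0 => Polynomial.X
  | (n+1) => φ.comp (iterPoly φ n)

omit [IsAlgClosed Cv] in
lemma iterPoly_eval (φ : Polynomial Cv) (n : ℕ) (x : Cv) :
    (iterPoly φ n).eval x = (fun y => φ.eval y)^[n] x := by
  induction n with
  | zero => simp [iterPoly]
  | succ k ih =>
    rw [iterPoly, eval_comp, ih, Function.iterate_succ_apply']

omit [IsAlgClosed Cv] in
lemma iterPoly_natDegree (φ : Polynomial Cv) (n : ℕ) :
    (iterPoly φ n).natDegree = φ.natDegree ^ n := by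
  induction n with
  | zero => simp [iterPoly]
  | succ k ih => rw [iterPoly, natDegree_comp, ih, pow_succ']

/-- Exponent of the leading coefficient of the `n`-th iterate: `(d^n - 1)/(d - 1)`. -/
def enAux (d : ℕ) : ℕ → ℕ
  | 0 => 0
  | (n+1) => d * enAux d n + 1

lemma enAux_ge (d : ℕ) (hd : 1 ≤ d) (n : ℕ) : n ≤ enAux d n := by
  induction n with
  | zero => simp [enAux]
  | succ k ih =>
    have : enAux d k ≤ d * enAux d k := Nat.le_mul_of_pos_left _ hd
    simp only [enAux]
    omega

omit [IsAlgClosed Cv] in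
lemma iterPoly_leadingCoeff (φ : Polynomial Cv) (d : ℕ) (hdeg : φ.natDegree = d)
    (hd : 1 ≤ d) (n : ℕ) :
    (iterPoly φ n).leadingCoeff = φ.leadingCoeff ^ enAux d n := by
  induction n with
  | zero => simp [iterPoly, enAux]
  | succ k ih =>
    have hq : (iterPoly φ k).natDegree ≠ 0 := by
      rw [iterPoly_natDegree, hdeg]
      positivity
    rw [iterPoly, leadingCoeff_comp hq, ih, hdeg]
    show φ.leadingCoeff * (φ.leadingCoeff ^ enAux d k) ^ d = φ.leadingCoeff ^ enAux d (k+1)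
    simp only [enAux]
    ring

lemma key_pow {d : ℕ} (A t : ℝ) (n : ℕ) :
    A ^ enAux (d+1) n * t ^ ((d+1) ^ n) = t * (A * t ^ d) ^ enAux (d+1) n := by
  induction n with
  | zero => simp [enAux]
  | succ k ih =>
    simp only [enAux]
    calc A ^ ((d+1) * enAux (d+1) k + 1) * t ^ ((d+1) ^ (k+1))
        = A * (A ^ enAux (d+1) k * t ^ ((d+1)^k)) ^ (d+1) := by ring
      _ = A * (t * (A * t ^ d) ^ enAux (d+1) k) ^ (d+1) := by rw [ih]
      _ = t * (A * t ^ d) ^ ((d+1) * enAux (d+1) k + 1) := by ring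

omit [IsAlgClosed Cv] in
/-- `leadingCoeff (P - C b) = leadingCoeff P` when `natDegree P ≠ 0`. -/
lemma leadingCoeff_sub_C' {P : Polynomial Cv} (hP : P.natDegree ≠ 0) (b : Cv) :
    (P - C b).leadingCoeff = P.leadingCoeff := by
  unfold leadingCoeff
  rw [natDegree_sub_C, coeff_sub, coeff_C, if_neg hP, sub_zero]
end H2

lemma key_pow' {d : ℕ} (hd : 1 ≤ d) (A t : ℝ) (n : ℕ) :
    A ^ enAux d n * t ^ (d ^ n) = t * (A * t ^ (d - 1)) ^ enAux d n := by
  obtain ⟨m, rfl⟩ : ∃ m, d = m + 1 := ⟨d - 1, by omega⟩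
  simpa using key_pow A t n



section H3
variable {Cv : Type*} [Field Cv] (v : AbsoluteValue Cv ℝ) (φ : Polynomial Cv)

lemma julia_iter_mem {x : Cv} (hx : x ∈ filledJulia v φ) (n : ℕ) :
    (fun y => φ.eval y)^[n] x ∈ filledJulia v φ := by
  obtain ⟨B, hB⟩ := hx
  exact ⟨B, fun m => by rw [← Function.iterate_add_apply]; exact hB (m + n)⟩

lemma julia_fixed_mem {x₀ : Cv} (hfix : φ.eval x₀ = x₀) : x₀ ∈ filledJulia v φ := by
  refine ⟨v x₀, fun n => ?_⟩
  have : (fun y => φ.eval y)^[n] x₀ = x₀ := by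
    induction n with
    | zero => rfl
    | succ k ih => rw [Function.iterate_succ_apply', ih, hfix]
  rw [this]

lemma julia_preimage_mem {x₀ ξ : Cv} (hfix : φ.eval x₀ = x₀) (n : ℕ)
    (hξ : (fun y => φ.eval y)^[n] ξ = x₀) : ξ ∈ filledJulia v φ := by
  have hfix' : ∀ j, (fun y => φ.eval y)^[j] x₀ = x₀ := by
    intro j
    induction j with
    | zero => rfl
    | succ k ih => rw [Function.iterate_succ_apply', ih, hfix]
  refine ⟨(Finset.range (n+1)).sup' (by simp) (fun k => v ((fun y => φ.eval y)^[k] ξ)), ?_⟩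
  intro m
  rcases le_or_gt m n with hm | hm
  · exact Finset.le_sup' (fun k => v ((fun y => φ.eval y)^[k] ξ)) (Finset.mem_range.mpr (show m < n+1 by omega))
  · have : (fun y => φ.eval y)^[m] ξ = x₀ := by
      have := Function.iterate_add_apply (fun y => φ.eval y) (m - n) n ξ
      rw [hξ, hfix'] at this
      rw [show m = (m - n) + n by omega, this]
    rw [this, ← hξ]
    exact Finset.le_sup' (fun k => v ((fun y => φ.eval y)^[k] ξ)) (Finset.mem_range.mpr (show n < n+1 by omega))
end H3

theorem aux_main {Cv : Type*} [Field Cv] [IsAlgClosed Cv] (v : AbsoluteValue Cv ℝ)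
    (hna : IsNonarchimedean (v : Cv → ℝ))
    (hnt : ∃ x : Cv, x ≠ 0 ∧ v x ≠ 1)
    (φ : Polynomial Cv) (d : ℕ) (hdeg : φ.natDegree = d) (hd : 2 ≤ d) :
    ∃ (x₀ : Cv) (s : ℝ), x₀ ∈ filledJulia v φ ∧
      (v φ.leadingCoeff) ^ (-(1 / ((d : ℝ) - 1))) ≤ s ∧
      (∀ x ∈ filledJulia v φ, v (x - x₀) ≤ s) ∧
      (∃ xm ∈ filledJulia v φ, v (xm - x₀) = s) := by
  have hφ0 : φ ≠ 0 := by
    intro h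
    rw [h, natDegree_zero] at hdeg
    omega
  set a := φ.leadingCoeff with ha_def
  have ha : a ≠ 0 := leadingCoeff_ne_zero.mpr hφ0
  set A := v a with hA_def
  have hA : 0 < A := v.pos ha
  -- fixed point
  have hXdeg : (X : Polynomial Cv).natDegree < φ.natDegree := by
    rw [hdeg, natDegree_X]; omega
  have hψdeg : (φ - X).natDegree = d := by
    rw [natDegree_sub_eq_left_of_natDegree_lt hXdeg, hdeg]
  have hψ0 : φ - X ≠ 0 := by
    intro h
    rw [h, natDegree_zero] at hψdeg
    omega
  have hψdegne : (φ - X).degree ≠ 0 := by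
    rw [degree_eq_natDegree hψ0, hψdeg]
    simp only [ne_eq, Nat.cast_eq_zero]
    omega
  obtain ⟨x₀, hx₀root⟩ := IsAlgClosed.exists_root (φ - X) hψdegne
  have hfix : φ.eval x₀ = x₀ := by
    have h := hx₀root
    rw [IsRoot, eval_sub, eval_X, sub_eq_zero] at h
    exact h
  have hx₀K : x₀ ∈ filledJulia v φ := julia_fixed_mem v φ hfix
  -- the radius ρ
  obtain ⟨c, hc⟩ := IsAlgClosed.exists_pow_nat_eq (a⁻¹) (show 0 < d - 1 by omega)
  have hc0 : c ≠ 0 := by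
    intro h
    rw [h, zero_pow (show d - 1 ≠ 0 by omega)] at hc
    exact inv_ne_zero ha hc.symm
  set ρ := v c with hρ_def
  have hρpos : 0 < ρ := v.pos hc0
  have hρ : A * ρ ^ (d - 1) = 1 := by
    rw [hρ_def, ← v.map_pow, hA_def, ← v.map_mul, hc, mul_inv_cancel₀ ha, v.map_one]
  -- identification of ρ with the rpow expression
  have hE : (v φ.leadingCoeff) ^ (-(1 / ((d : ℝ) - 1))) = ρ := by
    have hd2R : (2:ℝ) ≤ (d:ℝ) := by exact_mod_cast hd
    have hdne : ((d:ℝ) - 1) ≠ 0 := by linarith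
    have hcast : ((d - 1 : ℕ) : ℝ) = (d:ℝ) - 1 := by
      have h1 : 1 ≤ d := by omega
      push_cast [Nat.cast_sub h1]
      ring
    have hEpow : ((v φ.leadingCoeff) ^ (-(1 / ((d : ℝ) - 1)))) ^ (d - 1 : ℕ)
        = ρ ^ (d - 1 : ℕ) := by
      rw [← Real.rpow_natCast ((v φ.leadingCoeff) ^ (-(1 / ((d : ℝ) - 1)))) (d - 1),
        ← Real.rpow_mul hA.le, hcast]
      have hexp : (-(1 / ((d : ℝ) - 1))) * ((d:ℝ) - 1) = -1 := by
        field_simp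
      rw [hexp, Real.rpow_neg_one]
      have : ρ ^ (d - 1 : ℕ) = A⁻¹ := by
        field_simp
        linarith [hρ]
      rw [this]
    have h1 : (0:ℝ) ≤ (v φ.leadingCoeff) ^ (-(1 / ((d : ℝ) - 1))) :=
      Real.rpow_nonneg hA.le _
    exact (pow_left_strictMonoOn₀ (show d - 1 ≠ 0 by omega)).injOn h1 hρpos.le hEpow
  -- the polynomial φ - C x₀ and its roots
  have hCddeg : (φ - C x₀).natDegree = d := by rw [natDegree_sub_C, hdeg]
  have hψlc : (φ - C x₀).leadingCoeff = a := by
    rw [leadingCoeff_sub_C' (by rw [hdeg]; omega) x₀]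
  have hψcard : Multiset.card (φ - C x₀).roots = d := by
    rw [splits_iff_card_roots.mp (IsAlgClosed.splits _), hCddeg]
  have hψrootsK : ∀ θ ∈ (φ - C x₀).roots, θ ∈ filledJulia v φ := by
    intro θ hθ
    have hθ0 : φ.eval θ = x₀ := by
      have h := (mem_roots'.mp hθ).2
      rw [IsRoot, eval_sub, eval_C, sub_eq_zero] at h
      exact h
    exact julia_preimage_mem v φ hfix 1 (by simpa using hθ0)
  have hevalψ : ∀ y : Cv, v (φ.eval y - x₀)
      = A * (((φ - C x₀).roots.map (fun u => v (y - u))).prod) := by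
    intro y
    have h := v_eval_eq v (φ - C x₀) y
    rw [eval_sub, eval_C] at h
    rw [h, hψlc]
  -- Claim A
  have claimA : (∀ θ ∈ (φ - C x₀).roots, v (θ - x₀) < ρ) →
      ∃ z ∈ filledJulia v φ, v (z - x₀) = ρ := by
    intro hroots
    have hzx : v ((x₀ + c) - x₀) = ρ := by
      rw [add_sub_cancel_left]
    have horb : ∀ k, v ((fun y => φ.eval y)^[k] (x₀ + c) - x₀) = ρ := by
      intro k
      induction k with
      | zero => simpa using hzx
      | succ k ih =>
        rw [Function.iterate_succ_apply']
        set y := (fun y => φ.eval y)^[k] (x₀ + c) with hy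
        have hall : ∀ r ∈ ((φ - C x₀).roots.map (fun u => v (y - u))), r = ρ := by
          intro r hr
          obtain ⟨u, hu, rfl⟩ := Multiset.mem_map.mp hr
          have h1 : v (x₀ - u) < v (y - x₀) := by
            rw [v.map_sub, ih]
            exact hroots u hu
          calc v (y - u) = v ((y - x₀) + (x₀ - u)) := by rw [sub_add_sub_cancel]
            _ = v (y - x₀) := v_add_eq v hna h1
            _ = ρ := ih
        rw [hevalψ y, multiset_prod_const hall, Multiset.card_map, hψcard]
        have hpow : ρ ^ d = ρ ^ (d - 1) * ρ := by rw [← pow_succ]; congr 1; omega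
        calc A * ρ ^ d = (A * ρ ^ (d - 1)) * ρ := by rw [hpow]; ring
          _ = ρ := by rw [hρ, one_mul]
    refine ⟨x₀ + c, ⟨max ρ (v x₀), fun n => ?_⟩, hzx⟩
    calc v ((fun y => φ.eval y)^[n] (x₀ + c))
        = v (((fun y => φ.eval y)^[n] (x₀ + c) - x₀) + x₀) := by rw [sub_add_cancel]
      _ ≤ max (v ((fun y => φ.eval y)^[n] (x₀ + c) - x₀)) (v x₀) := hna _ _
      _ ≤ max ρ (v x₀) := by rw [horb n]
  -- boundedness of the filled Julia set
  obtain ⟨m, hm⟩ := multiset_bound ((φ - C x₀).roots.map (fun θ => v (θ - x₀)))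
  set RK := max m ρ with hRK_def
  have hKbound : ∀ x ∈ filledJulia v φ, v (x - x₀) ≤ RK := by
    intro x hx
    by_contra hgt
    push_neg at hgt
    set τ := v (x - x₀) with hτ_def
    have hτρ : ρ < τ := lt_of_le_of_lt (le_max_right m ρ) hgt
    have hτm : m < τ := lt_of_le_of_lt (le_max_left m ρ) hgt
    have hτ0 : 0 < τ := lt_trans hρpos hτρ
    set lam := A * τ ^ (d - 1) with hlam_def
    have hlam : 1 < lam := by
      have h1 : ρ ^ (d - 1) < τ ^ (d - 1) :=
        pow_lt_pow_left₀ hτρ hρpos.le (by omega)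
      calc (1:ℝ) = A * ρ ^ (d - 1) := hρ.symm
        _ < A * τ ^ (d - 1) := by exact mul_lt_mul_of_pos_left h1 hA
    have hgrow : ∀ k, τ * lam ^ k ≤ v ((fun y => φ.eval y)^[k] x - x₀) := by
      intro k
      induction k with
      | zero => simpa using le_rfl
      | succ k ih =>
        set y := (fun y => φ.eval y)^[k] x with hy
        have honele : (1:ℝ) ≤ lam ^ k := one_le_pow₀ hlam.le
        have hu : τ ≤ v (y - x₀) := le_trans (le_mul_of_one_le_right hτ0.le honele) ih
        rw [Function.iterate_succ_apply']
        have hall : ∀ r ∈ ((φ - C x₀).roots.map (fun u => v (y - u))), r = v (y - x₀) := by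
          intro r hr
          obtain ⟨u, hu', rfl⟩ := Multiset.mem_map.mp hr
          have h1 : v (x₀ - u) < v (y - x₀) := by
            rw [v.map_sub]
            exact lt_of_le_of_lt (hm _ (Multiset.mem_map_of_mem _ hu'))
              (lt_of_lt_of_le hτm hu)
          calc v (y - u) = v ((y - x₀) + (x₀ - u)) := by rw [sub_add_sub_cancel]
            _ = v (y - x₀) := v_add_eq v hna h1
        rw [hevalψ y, multiset_prod_const hall, Multiset.card_map, hψcard]
        have hpow : v (y - x₀) ^ d = v (y - x₀) ^ (d - 1) * v (y - x₀) := by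
          rw [← pow_succ]; congr 1; omega
        have h2 : A * v (y - x₀) ^ d = (A * v (y - x₀) ^ (d - 1)) * v (y - x₀) := by
          rw [hpow]; ring
        have h3 : lam ≤ A * v (y - x₀) ^ (d - 1) :=
          mul_le_mul_of_nonneg_left (pow_le_pow_left₀ hτ0.le hu _) hA.le
        calc τ * lam ^ (k + 1) = lam * (τ * lam ^ k) := by ring
          _ ≤ lam * v (y - x₀) :=
              mul_le_mul_of_nonneg_left ih (le_trans zero_le_one hlam.le)
          _ ≤ (A * v (y - x₀) ^ (d - 1)) * v (y - x₀) :=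
              mul_le_mul_of_nonneg_right h3 (le_trans hτ0.le hu)
          _ = A * v (y - x₀) ^ d := h2.symm
    obtain ⟨B, hB⟩ := hx
    have hB' : ∀ k, v ((fun y => φ.eval y)^[k] x - x₀) ≤ max B (v x₀) := by
      intro k
      calc v ((fun y => φ.eval y)^[k] x - x₀)
          = v ((fun y => φ.eval y)^[k] x + (-x₀)) := by rw [sub_eq_add_neg]
        _ ≤ max (v ((fun y => φ.eval y)^[k] x)) (v (-x₀)) := hna _ _
        _ ≤ max B (v x₀) := by rw [v.map_neg]; exact max_le_max (hB k) le_rfl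
    obtain ⟨k, hk⟩ := pow_unbounded_of_one_lt (max B (v x₀) / τ) hlam
    rw [div_lt_iff₀ hτ0] at hk
    have h5 : lam ^ k * τ = τ * lam ^ k := mul_comm _ _
    have := hgrow k
    have := hB' k
    linarith
  -- the sup
  have hx₀0 : v (x₀ - x₀) = 0 := by rw [sub_self, v.map_zero]
  set S := (fun x => v (x - x₀)) '' (filledJulia v φ) with hS_def
  have hSne : S.Nonempty := ⟨v (x₀ - x₀), ⟨x₀, hx₀K, rfl⟩⟩
  have hSbdd : BddAbove S := by
    refine ⟨RK, ?_⟩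
    rintro r ⟨x, hx, rfl⟩
    exact hKbound x hx
  set s := sSup S with hs_def
  have hsub : ∀ x ∈ filledJulia v φ, v (x - x₀) ≤ s :=
    fun x hx => le_csSup hSbdd ⟨x, hx, rfl⟩
  have hsle : ∀ b : ℝ, (∀ x ∈ filledJulia v φ, v (x - x₀) ≤ b) → s ≤ b := by
    intro b hb
    refine csSup_le hSne ?_
    rintro r ⟨x, hx, rfl⟩
    exact hb x hx
  have hρs : ρ ≤ s := by
    by_contra h
    push_neg at h
    obtain ⟨z, hzK, hzρ⟩ := claimA
      (fun θ hθ => lt_of_le_of_lt (hsub θ (hψrootsK θ hθ)) h)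
    have h2 := hsub z hzK
    rw [hzρ] at h2
    linarith
  by_cases hat : ∃ xm ∈ filledJulia v φ, v (xm - x₀) = s
  · exact ⟨x₀, s, hx₀K, by rw [hE]; exact hρs, hsub, hat⟩
  exfalso
  rcases eq_or_lt_of_le hρs with heq | hlt
  · -- s = ρ : all roots are at distance < ρ, contradiction via claim A
    obtain ⟨z, hzK, hzρ⟩ := claimA (by
      intro θ hθ
      have h1 := hsub θ (hψrootsK θ hθ)
      have h2 : v (θ - x₀) ≠ s := fun h => hat ⟨θ, hψrootsK θ hθ, h⟩
      rw [← heq] at h1 h2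
      exact lt_of_le_of_ne h1 h2)
    exact hat ⟨z, hzK, by rw [hzρ, heq]⟩
  · -- main case : ρ < s and the sup is not attained
    have hex : ∃ y₀ ∈ filledJulia v φ, ρ < v (y₀ - x₀) := by
      by_contra h
      push_neg at h
      exact absurd (hsle ρ h) (not_le.mpr hlt)
    obtain ⟨y₀, hy₀K, hy₀⟩ := hex
    set t₀ := v (y₀ - x₀) with ht₀_def
    have ht₀s : t₀ < s :=
      lt_of_le_of_ne (hsub y₀ hy₀K) (fun h => hat ⟨y₀, hy₀K, h⟩)
    have ht₀0 : 0 < t₀ := lt_trans hρpos hy₀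
    set κ := A * t₀ ^ (d - 1) with hκ_def
    have hκ : 1 < κ := by
      have h1 : ρ ^ (d - 1) < t₀ ^ (d - 1) :=
        pow_lt_pow_left₀ hy₀ hρpos.le (by omega)
      calc (1:ℝ) = A * ρ ^ (d - 1) := hρ.symm
        _ < A * t₀ ^ (d - 1) := mul_lt_mul_of_pos_left h1 hA
    -- choose R in the value group, large
    have hg : ∃ g : Cv, 1 < v g := by
      obtain ⟨x1, hx10, hx11⟩ := hnt
      rcases lt_or_gt_of_ne hx11 with h | h
      · refine ⟨x1⁻¹, ?_⟩
        have h1 : v x1 * v x1⁻¹ = 1 := by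
          rw [← v.map_mul, mul_inv_cancel₀ hx10, v.map_one]
        have h0 : 0 < v x1 := v.pos hx10
        nlinarith [v.nonneg x1⁻¹]
      · exact ⟨x1, h⟩
    obtain ⟨g, hg1⟩ := hg
    obtain ⟨k, hk⟩ := pow_unbounded_of_one_lt RK hg1
    set R := v g ^ k with hR_def
    set cR := g ^ k with hcR_def
    have hcR : v cR = R := v.map_pow g k
    have hRK : RK ≤ R := hk.le
    -- choose n
    obtain ⟨n, hn⟩ := pow_unbounded_of_one_lt (R / t₀) hκ
    set D := d ^ n with hD_def
    have hDne : D ≠ 0 := by positivity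
    have hRn : R < A ^ (enAux d n) * t₀ ^ D := by
      have h1 : A ^ enAux d n * t₀ ^ D = t₀ * κ ^ enAux d n :=
        key_pow' (by omega) A t₀ n
      have h2 : κ ^ n ≤ κ ^ enAux d n :=
        pow_le_pow_right₀ hκ.le (enAux_ge d (by omega) n)
      rw [div_lt_iff₀ ht₀0] at hn
      have h3 : R < t₀ * κ ^ n := by
        have : κ ^ n * t₀ = t₀ * κ ^ n := mul_comm _ _
        linarith
      calc R < t₀ * κ ^ n := h3
        _ ≤ t₀ * κ ^ enAux d n := by nlinarith [h2, ht₀0]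
        _ = A ^ enAux d n * t₀ ^ D := h1.symm
    -- the iterate polynomial and the two shifted polynomials
    set P := iterPoly φ n with hP_def
    have hPdeg : P.natDegree = D := by rw [hP_def, iterPoly_natDegree, hdeg]
    have hPdegne : P.natDegree ≠ 0 := by rw [hPdeg]; exact hDne
    have hPlc : P.leadingCoeff = a ^ enAux d n :=
      iterPoly_leadingCoeff φ d hdeg (by omega) n
    set q := x₀ + cR with hq_def
    have hqv : v (x₀ - q) = R := by
      rw [hq_def, sub_add_cancel_left, v.map_neg, hcR]
    have hQcard : Multiset.card (P - C q).roots = D := by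
      rw [splits_iff_card_roots.mp (IsAlgClosed.splits _), natDegree_sub_C, hPdeg]
    have hQlc : (P - C q).leadingCoeff = a ^ enAux d n := by
      rw [leadingCoeff_sub_C' hPdegne, hPlc]
    have hQeval : ∀ y : Cv, (P - C q).eval y = (fun y => φ.eval y)^[n] y - q := by
      intro y
      rw [eval_sub, eval_C, hP_def, iterPoly_eval]
    have hQ'card : Multiset.card (P - C x₀).roots = D := by
      rw [splits_iff_card_roots.mp (IsAlgClosed.splits _), natDegree_sub_C, hPdeg]
    have hQ'lc : (P - C x₀).leadingCoeff = a ^ enAux d n := by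
      rw [leadingCoeff_sub_C' hPdegne, hPlc]
    have hQ'eval : ∀ y : Cv, (P - C x₀).eval y = (fun y => φ.eval y)^[n] y - x₀ := by
      intro y
      rw [eval_sub, eval_C, hP_def, iterPoly_eval]
    have hQ'K : ∀ ξ ∈ (P - C x₀).roots, ξ ∈ filledJulia v φ ∧ v (ξ - x₀) < s := by
      intro ξ hξ
      have h0 : (fun y => φ.eval y)^[n] ξ = x₀ := by
        have h := (mem_roots'.mp hξ).2
        rw [IsRoot, hQ'eval, sub_eq_zero] at h
        exact h
      have hK := julia_preimage_mem v φ hfix n h0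
      exact ⟨hK, lt_of_le_of_ne (hsub ξ hK) (fun h => hat ⟨ξ, hK, h⟩)⟩
    -- Step 3 : there is a root of P - C q at distance ≥ s from x₀
    have hstep3 : ∃ xs ∈ (P - C q).roots, s ≤ v (xs - x₀) := by
      by_contra hcon
      push_neg at hcon
      obtain ⟨b, hbs, hb⟩ := multiset_bound_lt
        (M := (P - C q).roots.map (fun u => v (u - x₀))) (by
          rintro r hr
          obtain ⟨u, hu, rfl⟩ := Multiset.mem_map.mp hr
          exact hcon u hu)
      have hβs : max b t₀ < s := max_lt hbs ht₀s
      have hey : ∃ y ∈ filledJulia v φ, max b t₀ < v (y - x₀) := by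
        by_contra h
        push_neg at h
        exact absurd (hsle _ h) (not_le.mpr hβs)
      obtain ⟨y, hyK, hyβ⟩ := hey
      have hall : ∀ r ∈ ((P - C q).roots.map (fun u => v (y - u))), r = v (y - x₀) := by
        intro r hr
        obtain ⟨u, hu, rfl⟩ := Multiset.mem_map.mp hr
        have h1 : v (x₀ - u) < v (y - x₀) := by
          rw [v.map_sub]
          exact lt_of_le_of_lt
            (le_trans (hb _ (Multiset.mem_map_of_mem _ hu)) (le_max_left b t₀)) hyβ
        calc v (y - u) = v ((y - x₀) + (x₀ - u)) := by rw [sub_add_sub_cancel]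
          _ = v (y - x₀) := v_add_eq v hna h1
      have hev := v_eval_eq v (P - C q) y
      rw [hQlc, multiset_prod_const hall, Multiset.card_map, hQcard, v.map_pow] at hev
      have hlow : R < v ((P - C q).eval y) := by
        rw [hev]
        have ht₀t : t₀ < v (y - x₀) := lt_of_le_of_lt (le_max_right b t₀) hyβ
        have h6 : t₀ ^ D < v (y - x₀) ^ D := pow_lt_pow_left₀ ht₀t ht₀0.le hDne
        calc R < A ^ enAux d n * t₀ ^ D := hRn
          _ < A ^ enAux d n * v (y - x₀) ^ D :=
            mul_lt_mul_of_pos_left h6 (pow_pos hA _)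
      have hup : v ((P - C q).eval y) ≤ R := by
        rw [hQeval y]
        have hyK' : (fun y => φ.eval y)^[n] y ∈ filledJulia v φ := julia_iter_mem v φ hyK n
        have h1 : v ((fun y => φ.eval y)^[n] y - x₀) ≤ R :=
          le_trans (hKbound _ hyK') hRK
        calc v ((fun y => φ.eval y)^[n] y - q)
            = v (((fun y => φ.eval y)^[n] y - x₀) + (x₀ - q)) := by rw [sub_add_sub_cancel]
          _ ≤ max (v ((fun y => φ.eval y)^[n] y - x₀)) (v (x₀ - q)) := hna _ _
          _ ≤ R := by rw [hqv]; exact max_le h1 le_rfl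
      linarith
    obtain ⟨xs, hxs, hxss⟩ := hstep3
    -- Step 4 : contradiction
    have hxsq : (fun y => φ.eval y)^[n] xs = q := by
      have h := (mem_roots'.mp hxs).2
      rw [IsRoot, hQeval, sub_eq_zero] at h
      exact h
    have hall' : ∀ r ∈ ((P - C x₀).roots.map (fun u => v (xs - u))), r = v (xs - x₀) := by
      intro r hr
      obtain ⟨u, hu, rfl⟩ := Multiset.mem_map.mp hr
      have h1 : v (x₀ - u) < v (xs - x₀) := by
        rw [v.map_sub]
        exact lt_of_lt_of_le (hQ'K u hu).2 hxss
      calc v (xs - u) = v ((xs - x₀) + (x₀ - u)) := by rw [sub_add_sub_cancel]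
        _ = v (xs - x₀) := v_add_eq v hna h1
    have hev' := v_eval_eq v (P - C x₀) xs
    rw [hQ'lc, multiset_prod_const hall', Multiset.card_map, hQ'card, v.map_pow] at hev'
    have hlhs : (P - C x₀).eval xs = cR := by
      rw [hQ'eval, hxsq, hq_def, add_sub_cancel_left]
    rw [hlhs, hcR] at hev'
    have hfin : A ^ enAux d n * t₀ ^ D < A ^ enAux d n * v (xs - x₀) ^ D := by
      have ht₀xs : t₀ < v (xs - x₀) := lt_of_lt_of_le ht₀s hxss
      exact mul_lt_mul_of_pos_left (pow_lt_pow_left₀ ht₀xs ht₀0.le hDne) (pow_pos hA _)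
    linarith

/-- Lemma 2.5a,b: Let `C_v` be a complete, algebraically closed field with a
nontrivial non-archimedean absolute value, and `φ ∈ C_v[z]` a polynomial of degree `d ≥ 2`
with leading coefficient `a_d ≠ 0`; set `ρ_v = |a_d|^{-1/(d-1)}`.  Then there is a unique
smallest disk `U₀` containing the filled Julia set `𝔎_{φ,v}`, and `U₀` is a closed disk of
some radius `r_v ≥ ρ_v`. -/
theorem exists_unique_smallest_disk_containing_filledJulia
    {Cv : Type*} [Field Cv] [IsAlgClosed Cv]
    (v : AbsoluteValue Cv ℝ)
    (hna : IsNonarchimedean v)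
    (hnt : ∃ x : Cv, x ≠ 0 ∧ v x ≠ 1)
    (hcomp : SeqComplete v)
    (φ : Polynomial Cv) (d : ℕ) (hdeg : φ.natDegree = d) (hd : 2 ≤ d) :
    ∃ U₀ : Set Cv,
      -- `U₀` is a smallest disk containing the filled Julia set
      (IsDisk v U₀ ∧ filledJulia v φ ⊆ U₀ ∧
        ∀ W : Set Cv, IsDisk v W → filledJulia v φ ⊆ W → U₀ ⊆ W) ∧
      -- and it is the unique such disk
      (∀ U' : Set Cv, (IsDisk v U' ∧ filledJulia v φ ⊆ U' ∧
        ∀ W : Set Cv, IsDisk v W → filledJulia v φ ⊆ W → U' ⊆ W) → U' = U₀) ∧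
      -- moreover `U₀` is a closed disk of some radius `r ≥ ρ_v = |a_d|^{-1/(d-1)}`
      (∃ (a : Cv) (r : ℝ), (v φ.leadingCoeff) ^ (-(1 / ((d : ℝ) - 1))) ≤ r ∧
        U₀ = {x : Cv | v (x - a) ≤ r}) := by
  obtain ⟨x₀, s, hx₀K, hρs, hsub, xm, hxmK, hxm⟩ := aux_main v hna hnt φ d hdeg hd
  have hφ0 : φ ≠ 0 := by
    intro h
    rw [h, natDegree_zero] at hdeg
    omega
  have hs0 : 0 < s :=
    lt_of_lt_of_le (Real.rpow_pos_of_pos (v.pos (leadingCoeff_ne_zero.mpr hφ0)) _) hρs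
  have hKsub : filledJulia v φ ⊆ {x : Cv | v (x - x₀) ≤ s} := fun x hx => hsub x hx
  have hmin : ∀ W : Set Cv, IsDisk v W → filledJulia v φ ⊆ W →
      {x : Cv | v (x - x₀) ≤ s} ⊆ W := by
    rintro W hW hKW
    have hx₀W := hKW hx₀K
    have hxmW := hKW hxmK
    rcases hW with ⟨b, r, hr, rfl⟩ | ⟨b, r, hr, rfl⟩
    · -- open disk
      have hbx₀ : v (x₀ - b) < r := hx₀W
      have hbxm : v (xm - b) < r := hxmW
      have hsr : s < r := by
        have h1 : v (xm - x₀) ≤ max (v (xm - b)) (v (b - x₀)) := by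
          calc v (xm - x₀) = v ((xm - b) + (b - x₀)) := by rw [sub_add_sub_cancel]
            _ ≤ max (v (xm - b)) (v (b - x₀)) := hna _ _
        rw [hxm] at h1
        exact lt_of_le_of_lt h1 (max_lt hbxm (by rw [v.map_sub]; exact hbx₀))
      intro u hu
      have hu' : v (u - x₀) ≤ s := hu
      show v (u - b) < r
      calc v (u - b) = v ((u - x₀) + (x₀ - b)) := by rw [sub_add_sub_cancel]
        _ ≤ max (v (u - x₀)) (v (x₀ - b)) := hna _ _
        _ < r := max_lt (lt_of_le_of_lt hu' hsr) hbx₀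
    · -- closed disk
      have hbx₀ : v (x₀ - b) ≤ r := hx₀W
      have hbxm : v (xm - b) ≤ r := hxmW
      have hsr : s ≤ r := by
        have h1 : v (xm - x₀) ≤ max (v (xm - b)) (v (b - x₀)) := by
          calc v (xm - x₀) = v ((xm - b) + (b - x₀)) := by rw [sub_add_sub_cancel]
            _ ≤ max (v (xm - b)) (v (b - x₀)) := hna _ _
        rw [hxm] at h1
        exact le_trans h1 (max_le hbxm (by rw [v.map_sub]; exact hbx₀))
      intro u hu
      have hu' : v (u - x₀) ≤ s := hu
      show v (u - b) ≤ r
      calc v (u - b) = v ((u - x₀) + (x₀ - b)) := by rw [sub_add_sub_cancel]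
        _ ≤ max (v (u - x₀)) (v (x₀ - b)) := hna _ _
        _ ≤ r := max_le (le_trans hu' hsr) hbx₀
  refine ⟨{x : Cv | v (x - x₀) ≤ s},
    ⟨Or.inr ⟨x₀, s, hs0, rfl⟩, hKsub, hmin⟩, ?_, ⟨x₀, s, hρs, rfl⟩⟩
  rintro U' ⟨hU'd, hU'K, hU'min⟩
  exact Set.Subset.antisymm
    (hU'min _ (Or.inr ⟨x₀, s, hs0, rfl⟩) hKsub)
    (hmin U' hU'd hU'K)
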